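/- Let r ≥ 2 be an integer and ξ ∈ {1,…,r}. Set s = r² + r + ξ and t = r³ + r² + ξ(r+1). Then μ(3; s/t) ≤ t. -/
import Mathlib


open Set

noncomputable section

/-- A `sub-cube` of side `ε` of the torus `(ℝ/ℤ)^d` with base vertex `x0`:
the set of points whose `i`-th coordinate lies in `[x0 i, x0 i + ε]` mod 1. -/
def subCube (d : ℕ) (ε : ℝ) (x0 : Fin d → AddCircle (1:ℝ)) :
    Set (Fin d → AddCircle (1:ℝ)) :=
  {x | ∀ i, ∃ θ : ℝ, 0 ≤ θ ∧ θ ≤ ε ∧ x i = x0 i + (θ : AddCircle (1:ℝ))}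

/-- `μ(d; ε)`: the minimum number of sub-cubes of side `ε` needed to cover `(ℝ/ℤ)^d`. -/
def torusCoverNum (d : ℕ) (ε : ℝ) : ℕ :=
  sInf {n : ℕ | ∃ x0 : Fin n → (Fin d → AddCircle (1:ℝ)),
    (⋃ j, subCube d ε (x0 j)) = Set.univ}

lemma slide (s t b L B Z : ℕ) (ht : 0 < t) (hb0 : 0 < b) (hbs : b ≤ s)
    (hreach : t ≤ L * b + s) :
    ∃ d ≤ L, ∃ c < s, B + d * b + c ≡ Z [MOD t] := by
  set D : ℕ := (Z + t - B % t) % t with hD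
  have hDlt : D < t := Nat.mod_lt _ ht
  have hdm : D / b * b + D % b = D := Nat.div_add_mod' D b
  have hmb : D % b < b := Nat.mod_lt _ hb0
  refine ⟨min (D / b) L, Nat.min_le_right _ _, D - (min (D / b) L) * b, ?_, ?_⟩
  · rcases le_or_gt (D / b) L with h | h
    · rw [min_eq_left h]; omega
    · rw [min_eq_right h.le]
      have : L * b ≤ D / b * b := Nat.mul_le_mul_right _ h.le
      omega
  · have hmul : (min (D / b) L) * b ≤ D := by
      rcases le_or_gt (D / b) L with h | h
      · rw [min_eq_left h]; omega
      · rw [min_eq_right h.le]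
        have : L * b ≤ D / b * b := Nat.mul_le_mul_right _ h.le
        omega
    have h1 : B + (min (D / b) L) * b + (D - (min (D / b) L) * b) = B + D := by omega
    rw [h1]
    have h2 : B + D ≡ B % t + D [MOD t] := Nat.ModEq.add_right _ (Nat.mod_modEq B t).symm
    have h3 : B % t + D ≡ B % t + (Z + t - B % t) [MOD t] :=
      Nat.ModEq.add_left _ (Nat.mod_modEq _ t)
    have h4 : B % t + (Z + t - B % t) = Z + t := by
      have : B % t < t := Nat.mod_lt _ ht
      omega
    calc B + D ≡ B % t + D [MOD t] := h2
      _ ≡ B % t + (Z + t - B % t) [MOD t] := h3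
      _ = Z + t := h4
      _ ≡ Z [MOD t] := Nat.add_mod_right Z t

lemma NT (r ξ s t b : ℕ) (hr : 2 ≤ r) (hξ1 : 1 ≤ ξ) (hξ2 : ξ ≤ r)
    (hs : s = r*r + r + ξ) (ht : t = r*s + ξ) (hb : b = r*r + r + 1)
    (Y Z : ℕ) (hY : Y < t) (hZ : Z < t) :
    ∃ j < s, ∃ c₂ < s, ∃ c₃ < s, (j*r + c₂ ≡ Y [MOD t]) ∧ (j*b + c₃ ≡ Z [MOD t]) := by
  have ht0 : 0 < t := by omega
  have hb0 : 0 < b := by omega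
  have hbs : b ≤ s := by omega
  have hrb : r*b = r*r*r + r*r + r := by rw [hb]; ring
  have hsr : s*r = r*r*r + r*r + ξ*r := by rw [hs]; ring
  have hrs : r*s = s*r := Nat.mul_comm r s
  have ht' : t = r*r*r + r*r + ξ*r + ξ := by rw [ht, hs]; ring
  have hξr : ξ*r ≤ r*r := Nat.mul_le_mul_right r hξ2
  have hreach : t ≤ r*b + s := by omega
  rcases lt_or_ge Y (r*r) with hY1 | hY1
  · -- Case 1 : Y < r²
    have hq := Nat.div_add_mod' Y r
    have hqr : Y % r < r := Nat.mod_lt _ (by omega)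
    have hqlt : Y / r < r := (Nat.div_lt_iff_lt_mul (by omega)).2 hY1
    set q := Y / r with hqdef
    have hqrY : q*r ≤ Y := by omega
    rcases lt_or_ge Z (q*b + s) with hZ1 | hZ1
    · -- Case 1a
      have hzm := Nat.div_add_mod' Z b
      have hzb : Z % b < b := Nat.mod_lt _ hb0
      set d := min (Z / b) q with hd
      have hdq : d ≤ q := min_le_right _ _
      have hdr : d*r ≤ q*r := Nat.mul_le_mul_right r hdq
      have hdbZ : d*b ≤ Z := by
        rcases le_or_gt (Z/b) q with h | h
        · rw [hd, min_eq_left h]; omega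
        · rw [hd, min_eq_right h.le]
          have : q*b ≤ Z/b*b := Nat.mul_le_mul_right b h.le
          omega
      have hc3 : Z - d*b < s := by
        rcases le_or_gt (Z/b) q with h | h
        · have h1 : d*b = Z/b*b := by rw [hd, min_eq_left h]
          omega
        · have h1 : d*b = q*b := by rw [hd, min_eq_right h.le]
          omega
      refine ⟨d, by omega, Y - d*r, by omega, Z - d*b, hc3, ?_, ?_⟩
      · rw [show d*r + (Y - d*r) = Y from by omega]
      · rw [show d*b + (Z - d*b) = Z from by omega]
    · -- Case 1b
      set u := r*r + ξ with hu
      have hub : u*b = r*t + u := by rw [hu, hb, ht, hs]; ring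
      have htu : t = u*r + u := by rw [ht, hs, hu]; ring
      have hur : u*r = r*r*r + ξ*r := by rw [hu]; ring
      have hqb0 : (0:ℕ) ≤ q*b := Nat.zero_le _
      have huZ : u ≤ Z := by omega
      set D := Z - u with hD
      have hdm := Nat.div_add_mod' D b
      have hmb : D % b < b := Nat.mod_lt _ hb0
      have hqD : q*b ≤ D := by omega
      have hqDb : q ≤ D / b := (Nat.le_div_iff_mul_le hb0).2 hqD
      set i := min (D / b) (r - 1) with hi
      have hiq : q ≤ i := le_min hqDb (by omega)
      have hir : i ≤ r - 1 := min_le_right _ _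
      have hirr : i*r ≤ r*r := Nat.mul_le_mul_right r (by omega)
      have hqir : q*r ≤ i*r := Nat.mul_le_mul_right r hiq
      have hr1b : (r-1)*b + b = r*b := by
        have h5 : r - 1 + 1 = r := by omega
        calc (r-1)*b + b = ((r-1)+1)*b := by ring
          _ = r*b := by rw [h5]
      have hibD : i*b ≤ D := by
        rcases le_or_gt (D/b) (r-1) with h | h
        · have h1 : i*b = D/b*b := by rw [hi, min_eq_left h]
          omega
        · have h1 : i*b = (r-1)*b := by rw [hi, min_eq_right h.le]
          have h2 : (r-1)*b ≤ D/b*b := Nat.mul_le_mul_right b (by omega)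
          omega
      have hadd : (u+i)*r = u*r + i*r := Nat.add_mul _ _ _
      have haddb : (u+i)*b = u*b + i*b := Nat.add_mul _ _ _
      have hc3 : D - i*b < s := by
        rcases le_or_gt (D/b) (r-1) with h | h
        · have h1 : i*b = D/b*b := by rw [hi, min_eq_left h]
          omega
        · have h1 : i*b = (r-1)*b := by rw [hi, min_eq_right h.le]
          omega
      refine ⟨u + i, by omega, Y + t - (u+i)*r, by omega, D - i*b, hc3, ?_, ?_⟩
      · rw [show (u+i)*r + (Y + t - (u+i)*r) = Y + t from by omega]
        exact Nat.add_mod_right Y t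
      · rw [show (u+i)*b + (D - i*b) = Z + r*t from by omega]
        exact Nat.add_mul_mod_self_right Z r t
  · rcases lt_or_ge Y (r*s) with hY2 | hY2
    · -- Case 2 : r² ≤ Y < r·s
      have hq := Nat.div_add_mod' Y r
      have hqr : Y % r < r := Nat.mod_lt _ (by omega)
      set m := Y / r with hm
      have hm1 : r ≤ m := (Nat.le_div_iff_mul_le (by omega)).2 (by omega)
      have hm2 : m < s := (Nat.div_lt_iff_lt_mul (by omega)).2 (by omega)
      obtain ⟨d, hd, c₃, hc₃, hcong⟩ := slide s t b r ((m - r)*b) Z ht0 hb0 hbs hreach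
      have hdr : d*r ≤ r*r := Nat.mul_le_mul_right r hd
      have hrm : r*r ≤ m*r := Nat.mul_le_mul_right r hm1
      have hmrY : m*r ≤ Y := by omega
      have hexp : (m - r + d)*r = m*r + d*r - r*r := by
        have h5 : m - r + d = m + d - r := by omega
        rw [h5, Nat.sub_mul, Nat.add_mul]
      have hexpb : (m - r + d)*b = (m-r)*b + d*b := Nat.add_mul _ _ _
      refine ⟨m - r + d, by omega, Y - (m - r + d)*r, by omega, c₃, hc₃, ?_, ?_⟩
      · rw [show (m-r+d)*r + (Y - (m-r+d)*r) = Y from by omega]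
      · rw [hexpb]; exact hcong
    · -- Case 3 : r·s ≤ Y < t
      obtain ⟨d, hd, c₃, hc₃, hcong⟩ := slide s t b r ((s - 1 - r)*b) Z ht0 hb0 hbs hreach
      have hdr : d*r ≤ r*r := Nat.mul_le_mul_right r hd
      have hYsr : s*r ≤ Y := by omega
      have hs1r : r + 1 ≤ s := by omega
      have hexp : (s-1-r+d)*r + (r*r + r) = s*r + d*r := by
        have h5 : (s-1-r+d) + (r + 1) = s + d := by omega
        calc (s-1-r+d)*r + (r*r + r) = ((s-1-r+d) + (r+1))*r := by ring
          _ = (s+d)*r := by rw [h5]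
          _ = s*r + d*r := Nat.add_mul _ _ _
      have hexpb : (s - 1 - r + d)*b = (s-1-r)*b + d*b := Nat.add_mul _ _ _
      refine ⟨s - 1 - r + d, by omega, Y - (s-1-r+d)*r, by omega, c₃, hc₃, ?_, ?_⟩
      · rw [show (s-1-r+d)*r + (Y - (s-1-r+d)*r) = Y from by omega]
      · rw [hexpb]; exact hcong

lemma twist (t a m0 m1 j c s k : ℕ) (ht : 0 < t) (hc : c < s) (hj : j ≤ t)
    (hk : k = (m0 + t - j) % t) (hm1 : m1 < t)
    (hcong : j*a + c ≡ (m0 * a + s + t - 1 - m1) % t [MOD t]) :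
    k*a + (s - 1 - c) ≡ m1 [MOD t] := by
  have h1 : k ≡ m0 + t - j [MOD t] := by rw [hk]; exact Nat.mod_modEq _ t
  have h2 : k + j ≡ m0 + t [MOD t] := by
    have h := h1.add_right j
    rwa [show m0 + t - j + j = m0 + t from by omega] at h
  have h3 : (k + j) * a ≡ (m0 + t) * a [MOD t] := h2.mul_right a
  have h4 : (k + j) * a + (s - 1) ≡ (m0 + t) * a + (s - 1) [MOD t] := h3.add_right _
  have hklhs : k*a + (s - 1 - c) + (j*a + c) = (k + j)*a + (s - 1) := by
    have := Nat.add_mul k j a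
    omega
  have hrhs1 : (m0 + t) * a + (s - 1) = m0 * a + (s-1) + t * a := by
    have := Nat.add_mul m0 t a
    omega
  have hrhs2 : m0 * a + (s-1) + t * a ≡ m0 * a + (s-1) [MOD t] :=
    Nat.add_mul_mod_self_left (m0 * a + (s-1)) t a
  have lhsEq : k*a + (s - 1 - c) + (j*a + c) ≡ m0 * a + (s-1) [MOD t] := by
    rw [hklhs]
    exact h4.trans (by rw [hrhs1]; exact hrhs2)
  have rhsEq : m1 + (j*a + c) ≡ m0 * a + (s-1) [MOD t] := by
    have h5 : m1 + (j*a + c) ≡ m1 + ((m0 * a + s + t - 1 - m1) % t) [MOD t] :=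
      Nat.ModEq.add_left m1 hcong
    have h6 : m1 + ((m0 * a + s + t - 1 - m1) % t) ≡ m1 + (m0 * a + s + t - 1 - m1) [MOD t] :=
      Nat.ModEq.add_left m1 (Nat.mod_modEq _ t)
    have h7 : m1 + (m0 * a + s + t - 1 - m1) = m0 * a + (s-1) + t := by omega
    have h8 : m0 * a + (s-1) + t ≡ m0 * a + (s-1) [MOD t] := Nat.add_mod_right _ t
    exact (h5.trans h6).trans (by rw [h7]; exact h8)
  exact Nat.ModEq.add_right_cancel (Nat.ModEq.refl (j*a + c)) (lhsEq.trans rhsEq.symm)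

lemma cover_residues (r ξ s t b : ℕ) (hr : 2 ≤ r) (hξ1 : 1 ≤ ξ) (hξ2 : ξ ≤ r)
    (hs : s = r*r + r + ξ) (ht : t = r*s + ξ) (hb : b = r*r + r + 1)
    (m0 m1 m2 : ℕ) (hm0 : m0 < t) (hm1 : m1 < t) (hm2 : m2 < t) :
    ∃ k < t, ∃ c1 < s, ∃ c2 < s, ∃ c3 < s,
      (k * 1 + c1 ≡ m0 [MOD t]) ∧ (k * r + c2 ≡ m1 [MOD t]) ∧ (k * b + c3 ≡ m2 [MOD t]) := by
  have ht0 : 0 < t := by omega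
  have hst : s ≤ t := by
    have := Nat.le_mul_of_pos_left s (show 0 < r by omega)
    omega
  obtain ⟨j, hjs, c₂, hc₂, c₃, hc₃, hg2, hg3⟩ :=
    NT r ξ s t b hr hξ1 hξ2 hs ht hb
      ((m0 * r + s + t - 1 - m1) % t) ((m0 * b + s + t - 1 - m2) % t)
      (Nat.mod_lt _ ht0) (Nat.mod_lt _ ht0)
  refine ⟨(m0 + t - j) % t, Nat.mod_lt _ ht0, s - 1 - (s - 1 - j), by omega,
    s - 1 - c₂, by omega, s - 1 - c₃, by omega, ?_, ?_, ?_⟩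
  · apply twist t 1 m0 m0 j (s - 1 - j) s _ ht0 (by omega) (by omega) rfl hm0
    rw [show j*1 + (s - 1 - j) = s - 1 from by omega]
    have hmod : (m0 * 1 + s + t - 1 - m0) % t = s - 1 := by
      rw [show m0 * 1 + s + t - 1 - m0 = (s - 1) + t from by omega]
      rw [Nat.add_mod_right]
      exact Nat.mod_eq_of_lt (by omega)
    rw [hmod]
  · exact twist t r m0 m1 j c₂ s _ ht0 hc₂ (by omega) rfl hm1 hg2
  · exact twist t b m0 m2 j c₃ s _ ht0 hc₃ (by omega) rfl hm2 hg3

lemma coe_eq_coe_of_sub_int (x y : ℝ) (z : ℤ) (h : x - y = z) :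
    (↑x : AddCircle (1:ℝ)) = ↑y := by
  apply (QuotientAddGroup.eq_iff_sub_mem).2
  rw [h]
  exact ⟨z, by simp⟩

lemma exists_rep (z : AddCircle (1:ℝ)) : ∃ y : ℝ, 0 ≤ y ∧ y < 1 ∧ z = (y : AddCircle (1:ℝ)) := by
  refine QuotientAddGroup.induction_on z fun v =>
    ⟨Int.fract v, Int.fract_nonneg v, Int.fract_lt_one v, ?_⟩
  exact coe_eq_coe_of_sub_int v (Int.fract v) ⌊v⌋ (Int.self_sub_fract v)

/-- Theorem 4: improved upper bound `μ(3; s/t) ≤ t`. -/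
theorem mu_le_t (r ξ : ℕ) (hr : 2 ≤ r) (hξ1 : 1 ≤ ξ) (hξ2 : ξ ≤ r)
    (s t : ℕ) (hs : s = r^2 + r + ξ) (ht : t = r^3 + r^2 + ξ*(r + 1)) :
    torusCoverNum 3 ((s : ℝ) / (t : ℝ)) ≤ t := by
  have hs' : s = r*r + r + ξ := by rw [hs]; ring
  have ht' : t = r*s + ξ := by rw [ht, hs]; ring
  set b : ℕ := r*r + r + 1 with hb
  have ht0 : 0 < t := by omega
  have htR : (0:ℝ) < t := by exact_mod_cast ht0
  have hsR : (1:ℝ) ≤ s := by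
    have : 1 ≤ s := by omega
    exact_mod_cast this
  set A : Fin 3 → ℕ := ![1, r, b] with hA
  apply Nat.sInf_le
  refine ⟨fun k i => (((((k : Fin t) : ℕ) * A i : ℕ) : ℝ) / (t : ℝ) : ℝ), ?_⟩
  ext x
  simp only [Set.mem_iUnion, Set.mem_univ, iff_true]
  choose y hy0 hy1 hxy using fun i : Fin 3 => exists_rep (x i)
  set m : Fin 3 → ℕ := fun i => (⌊y i * t⌋).toNat with hm
  have hfl : ∀ i, (m i : ℝ) = ⌊y i * t⌋ := by
    intro i
    rw [hm]
    have h0 : (0:ℤ) ≤ ⌊y i * t⌋ := Int.floor_nonneg.2 (mul_nonneg (hy0 i) htR.le)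
    simp only []
    exact_mod_cast congrArg (Int.cast : ℤ → ℝ) (Int.toNat_of_nonneg h0)
  have hmle : ∀ i, (m i : ℝ) ≤ y i * t := by
    intro i; rw [hfl i]; exact Int.floor_le _
  have hmgt : ∀ i, y i * t < m i + 1 := by
    intro i; rw [hfl i]; exact Int.lt_floor_add_one _
  have hmlt : ∀ i, m i < t := by
    intro i
    have h1 : y i * t < t := by nlinarith [hy1 i]
    have h2 : (⌊y i * t⌋ : ℤ) < (t:ℤ) := by
      apply Int.floor_lt.2
      push_cast
      exact h1
    have hmi : m i = (⌊y i * t⌋).toNat := rfl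
    omega
  obtain ⟨k, hk, c1, hc1, c2, hc2, c3, hc3, hg1, hg2, hg3⟩ :=
    cover_residues r ξ s t b hr hξ1 hξ2 hs' ht' hb (m 0) (m 1) (m 2)
      (hmlt 0) (hmlt 1) (hmlt 2)
  refine ⟨⟨k, hk⟩, ?_⟩
  intro i
  have hAc : ∃ cc, cc < s ∧ (k * A i + cc ≡ m i [MOD t]) := by
    fin_cases i
    · exact ⟨c1, hc1, by simpa [hA] using hg1⟩
    · exact ⟨c2, hc2, by simpa [hA] using hg2⟩
    · exact ⟨c3, hc3, by simpa [hA] using hg3⟩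
  obtain ⟨cc, hcc, hcong⟩ := hAc
  have hmlekA : m i ≤ k * A i + cc := by
    have h2 : m i % t = m i := Nat.mod_eq_of_lt (hmlt i)
    have h3 := Nat.mod_le (k * A i + cc) t
    unfold Nat.ModEq at hcong
    omega
  obtain ⟨n, hn⟩ := (Nat.modEq_iff_dvd' hmlekA).1 hcong.symm
  have hkey : k * A i + cc = m i + t * n := by omega
  have hkeyR : (k:ℝ) * (A i : ℝ) + (cc:ℝ) = (m i : ℝ) + (t:ℝ) * (n:ℝ) := by
    exact_mod_cast congrArg (Nat.cast : ℕ → ℝ) hkey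
  refine ⟨((cc : ℝ) + (y i * t - m i)) / t, ?_, ?_, ?_⟩
  · apply div_nonneg _ htR.le
    have h0 : (0:ℝ) ≤ (cc:ℝ) := Nat.cast_nonneg _
    have := hmle i
    linarith
  · rw [div_le_div_iff₀ htR htR]
    have h1 : (cc : ℝ) ≤ (s:ℝ) - 1 := by
      have : (cc:ℕ) + 1 ≤ s := hcc
      have h := (Nat.cast_le (α := ℝ)).2 this
      push_cast at h
      linarith
    nlinarith [hmgt i, hmle i]
  · rw [hxy i]
    rw [← AddCircle.coe_add]
    apply coe_eq_coe_of_sub_int _ _ (-(n:ℤ))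
    have hAcast : ((↑(k * A i) : ℝ)) = (k:ℝ) * (A i : ℝ) := by push_cast; ring
    rw [hAcast]
    push_cast
    field_simp
    linarith [hkeyR]

end
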